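/- If there exists an (n,W)-universal graph with s vertices, then there exists a finite set A ⊆ ℤ with |A| ≤ s such that the W-linear graph on A is (n,W)-universal. -/

import Mathlib

open Filter


/-- A finite path: a list of consecutive edges, all belonging to `E`,
starting at `u` (when nonempty). -/
def FinPath {V : Type} (E : Set (V × ℤ × V)) (u : V) (p : List (V × ℤ × V)) : Prop :=
  (∀ e ∈ p, e ∈ E) ∧ List.Chain' (fun e e' => e.2.2 = e'.1) p ∧
    ∀ h : p ≠ [], (p.head h).1 = u

/-- The last vertex of a finite path starting at `u` (which is `u` itself for the empty path). -/
def lastV {V : Type} (u : V) (p : List (V × ℤ × V)) : V :=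
  (p.getLastD (u, 0, u)).2.2

/-- An infinite path: a sequence of consecutive edges, all belonging to `E`. -/
def InfPath {V : Type} (E : Set (V × ℤ × V)) (π : ℕ → V × ℤ × V) : Prop :=
  (∀ i, π i ∈ E) ∧ ∀ i, (π i).2.2 = (π (i + 1)).1

/-- The total weight of a finite path. -/
def pathWeight {V : Type} (p : List (V × ℤ × V)) : ℤ :=
  (p.map fun e => e.2.1).sum

/-- A sequence of integer weights satisfies mean payoff if the liminf of the
averages of its prefixes is nonnegative. -/
def MeanPayoffSeq (w : ℕ → ℤ) : Prop :=
  0 ≤ Filter.atTop.liminf (fun ℓ : ℕ => (∑ i ∈ Finset.range ℓ, (w i : ℝ)) / (ℓ : ℝ))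

/-- A graph (given by its edge set) satisfies mean payoff if all its infinite paths do. -/
def SatMP {V : Type} (E : Set (V × ℤ × V)) : Prop :=
  ∀ π : ℕ → V × ℤ × V, InfPath E π → MeanPayoffSeq (fun i => (π i).2.1)

/-- A cycle: a nonempty finite path whose first and last vertices coincide. -/
def IsCycle {V : Type} (E : Set (V × ℤ × V)) (p : List (V × ℤ × V)) : Prop :=
  p ≠ [] ∧ ∃ v, FinPath E v p ∧ lastV v p = v

/-- A `W`-graph: a finite set of vertices, edges labelled by weights in `W`,
and an initial vertex from which every vertex is reachable. -/
structure WGraph (W : Finset ℤ) where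
  V : Type
  fin : Fintype V
  E : Set (V × ℤ × V)
  init : V
  wt : ∀ e ∈ E, e.2.1 ∈ W
  reach : ∀ v : V, ∃ p, FinPath E init p ∧ lastV init p = v

attribute [instance] WGraph.fin

/-- The `W`-linear graph on a set `A ⊆ ℤ`: vertices are the elements of `A`, and
for `v, v' ∈ A` and `w ∈ W` there is an edge `(v, w, v')` whenever `v' - v ≤ w`. -/
def LinE (W : Finset ℤ) (A : Set ℤ) : Set (ℤ × ℤ × ℤ) :=
  {e | e.1 ∈ A ∧ e.2.2 ∈ A ∧ e.2.1 ∈ W ∧ e.2.2 - e.1 ≤ e.2.1}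

/-- A homomorphism of labelled graphs (no requirement on initial vertices). -/
def IsHom {V U : Type} (E : Set (V × ℤ × V)) (E' : Set (U × ℤ × U)) (φ : V → U) : Prop :=
  ∀ e ∈ E, (φ e.1, e.2.1, φ e.2.2) ∈ E'

/-- A graph (given by its edge set) is `(n,W)`-universal if it satisfies mean payoff and
every `(n,W)`-graph satisfying mean payoff admits a homomorphism into it. -/
def Universal (n : ℕ) (W : Finset ℤ) {U : Type} (EU : Set (U × ℤ × U)) : Prop :=
  SatMP EU ∧
    ∀ G : WGraph W, Fintype.card G.V ≤ n → SatMP G.E → ∃ φ : G.V → U, IsHom G.E EU φ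

/-- The set of weights `(-N, N)`: integers `w` with `-N < w < N`. -/
noncomputable def Wball (N : ℕ) : Finset ℤ := Finset.Ioo (-(N : ℤ)) (N : ℤ)

/-- `φ` is the distance function from the initial vertex: `φ v` is the minimum total
weight of a finite path from the initial vertex to `v`. -/
def IsDistFrom {W : Finset ℤ} (G : WGraph W) (φ : G.V → ℤ) : Prop :=
  ∀ v : G.V,
    (∃ p, FinPath G.E G.init p ∧ lastV G.init p = v ∧ pathWeight p = φ v) ∧
    ∀ p, FinPath G.E G.init p → lastV G.init p = v → φ v ≤ pathWeight p

namespace MPLin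

variable {V : Type}

lemma finPath_nil (E : Set (V × ℤ × V)) (u : V) : FinPath E u [] :=
  ⟨by simp, List.isChain_nil, fun h => absurd rfl h⟩

lemma lastV_eq_getLast {u : V} {q : List (V × ℤ × V)} (hq : q ≠ []) :
    lastV u q = (q.getLast hq).2.2 := by
  rw [lastV, List.getLastD_eq_getLast?, List.getLast?_eq_getLast hq]; rfl

lemma finPath_snoc_elim {E : Set (V × ℤ × V)} {u : V} {q : List (V × ℤ × V)} {e : V × ℤ × V}
    (h : FinPath E u (q ++ [e])) : FinPath E u q ∧ e ∈ E ∧ lastV u q = e.1 := by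
  obtain ⟨hE, hc, hh⟩ := h
  have hc' := List.isChain_append.mp hc
  refine ⟨⟨fun x hx => hE x (by simp [hx]), hc'.1, ?_⟩, hE e (by simp), ?_⟩
  · intro hq
    have := hh (by simp)
    rwa [List.head_append, dif_neg (by simpa using hq)] at this
  · by_cases hq : q = []
    · subst hq
      have := hh (by simp)
      simp only [List.nil_append, List.head_cons] at this
      simp [lastV, this]
    · have h3 := hc'.2.2 (q.getLast hq) (by simp [List.getLast?_eq_getLast hq]) e (by simp)
      rw [lastV_eq_getLast hq, h3]

lemma finPath_snoc {E : Set (V × ℤ × V)} {u : V} {q : List (V × ℤ × V)} {e : V × ℤ × V}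
    (hq : FinPath E u q) (he : e ∈ E) (hl : lastV u q = e.1) : FinPath E u (q ++ [e]) := by
  refine ⟨?_, ?_, ?_⟩
  · intro x hx
    rcases List.mem_append.mp hx with h | h
    · exact hq.1 x h
    · simp at h; subst h; exact he
  · refine List.isChain_append.mpr ⟨hq.2.1, List.isChain_singleton e, ?_⟩
    intro x hx y hy
    simp at hy; subst hy
    have hqne : q ≠ [] := by rintro rfl; simp at hx
    rw [List.getLast?_eq_getLast hqne] at hx
    simp at hx; subst hx
    rw [← hl, lastV_eq_getLast hqne]
  · intro h
    by_cases hq0 : q = []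
    · subst hq0
      simp only [List.nil_append, List.head_cons]
      rw [← hl]; rfl
    · rw [List.head_append, dif_neg (by simpa using hq0)]
      exact hq.2.2 hq0

lemma lastV_snoc (u : V) (q : List (V × ℤ × V)) (e : V × ℤ × V) :
    lastV u (q ++ [e]) = e.2.2 := by
  simp [lastV, List.getLastD_concat]

lemma pathWeight_snoc (q : List (V × ℤ × V)) (e : V × ℤ × V) :
    pathWeight (q ++ [e]) = pathWeight q + e.2.1 := by
  simp [pathWeight]

end MPLin

namespace MPLin

variable {V : Type}

/-- A walk given functionally: vertices `v`, weights `w`, length `m`. -/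
def FWalk (E : Set (V × ℤ × V)) (m : ℕ) (v : ℕ → V) (w : ℕ → ℤ) : Prop :=
  ∀ i < m, (v i, w i, v (i + 1)) ∈ E

lemma finPath_toFun {E : Set (V × ℤ × V)} {u : V} (p : List (V × ℤ × V))
    (hp : FinPath E u p) :
    ∃ (v : ℕ → V) (w : ℕ → ℤ), FWalk E p.length v w ∧ v 0 = u ∧
      v p.length = lastV u p ∧ ∑ i ∈ Finset.range p.length, w i = pathWeight p := by
  induction p using List.reverseRecOn with
  | nil =>
    exact ⟨fun _ => u, fun _ => 0, fun i hi => absurd hi (by simp), rfl, rfl, by simp [pathWeight]⟩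
  | append_singleton q e IH =>
    obtain ⟨hq, heE, hlast⟩ := finPath_snoc_elim hp
    obtain ⟨v, w, hw, hv0, hvl, hsum⟩ := IH hq
    refine ⟨Function.update v (q.length + 1) e.2.2, Function.update w q.length e.2.1,
      ?_, ?_, ?_, ?_⟩
    · intro i hi
      simp only [List.length_append, List.length_singleton] at hi
      rcases Nat.lt_or_ge i q.length with h | h
      · rw [Function.update_of_ne (by omega), Function.update_of_ne (by omega),
          Function.update_of_ne (by omega)]
        exact hw i h
      · have hi' : i = q.length := by omega
        subst hi'
        rw [Function.update_of_ne (by omega), Function.update_self, Function.update_self]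
        rw [hvl, hlast]
        exact heE
    · rw [Function.update_of_ne (by omega)]; exact hv0
    · rw [show (q ++ [e]).length = q.length + 1 from by simp, Function.update_self, lastV_snoc]
    · rw [show (q ++ [e]).length = q.length + 1 from by simp, Finset.sum_range_succ, Function.update_self, pathWeight_snoc, ← hsum]
      congr 1
      apply Finset.sum_congr rfl
      intro i hi
      rw [Function.update_of_ne (by simp at hi; omega)]

lemma shorten {E : Set (V × ℤ × V)} {m : ℕ} {v : ℕ → V} {w : ℕ → ℤ}
    (hw : FWalk E m v w) {i j : ℕ} (hij : i < j) (hjm : j ≤ m) (hv : v i = v j) :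
    FWalk E (m - (j - i)) (fun k => if k ≤ i then v k else v (k + (j - i)))
      (fun k => if k < i then w k else w (k + (j - i))) ∧
    ∑ k ∈ Finset.range (m - (j - i)), (if k < i then w k else w (k + (j - i)))
      = ∑ k ∈ Finset.range m, w k - ∑ k ∈ Finset.range (j - i), w (i + k) := by
  obtain ⟨d, hd, rfl⟩ : ∃ d, 0 < d ∧ j = i + d := ⟨j - i, by omega, by omega⟩
  obtain ⟨t, rfl⟩ : ∃ t, m = i + d + t := ⟨m - (i + d), by omega⟩
  simp only [show i + d - i = d from by omega, show i + d + t - d = i + t from by omega]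
  constructor
  · intro k hk
    beta_reduce
    rcases Nat.lt_trichotomy k i with h | h | h
    · rw [if_pos (by omega), if_pos (by omega), if_pos (by omega)]
      exact hw k (by omega)
    · subst h
      rw [if_pos (le_refl _), if_neg (by omega), if_neg (by omega), hv,
        show k + 1 + d = k + d + 1 by omega]
      exact hw (k + d) (by omega)
    · rw [if_neg (by omega), if_neg (by omega), if_neg (by omega),
        show k + 1 + d = k + d + 1 by omega]
      exact hw (k + d) (by omega)
  · rw [Finset.sum_range_add, show i + d + t = i + (d + t) from by omega,
      Finset.sum_range_add, Finset.sum_range_add]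
    have h1 : ∑ k ∈ Finset.range i, (if k < i then w k else w (k + d))
        = ∑ k ∈ Finset.range i, w k :=
      Finset.sum_congr rfl fun k hk => if_pos (Finset.mem_range.mp hk)
    have h2 : ∑ k ∈ Finset.range t, (if i + k < i then w (i + k) else w (i + k + d))
        = ∑ k ∈ Finset.range t, w (i + (d + k)) := by
      apply Finset.sum_congr rfl
      intro k hk
      rw [if_neg (by omega)]
      congr 1
      omega
    rw [h1, h2]
    ring

end MPLin

namespace MPLin

variable {V : Type}

lemma periodic_sum (m : ℕ) (w : ℕ → ℤ) (k : ℕ) :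
    ∑ i ∈ Finset.range (k * m), w (i % m) = k * ∑ i ∈ Finset.range m, w i := by
  induction k with
  | zero => simp
  | succ k IH =>
    rw [Nat.succ_mul, Finset.sum_range_add, IH]
    have : ∑ i ∈ Finset.range m, w ((k * m + i) % m) = ∑ i ∈ Finset.range m, w i := by
      apply Finset.sum_congr rfl
      intro i hi
      rw [mul_comm k m, Nat.mul_add_mod, Nat.mod_eq_of_lt (Finset.mem_range.mp hi)]
    rw [this]
    push_cast
    ring

lemma cycle_nonneg {E : Set (V × ℤ × V)} (hMP : SatMP E)
    {m : ℕ} {v : ℕ → V} {w : ℕ → ℤ} (hw : FWalk E m v w) (hm : 0 < m)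
    (hc : v m = v 0) : 0 ≤ ∑ i ∈ Finset.range m, w i := by
  by_contra hneg
  push_neg at hneg
  set π : ℕ → V × ℤ × V := fun n => (v (n % m), w (n % m), v (n % m + 1)) with hπ
  have hinf : InfPath E π := by
    constructor
    · intro i
      exact hw _ (Nat.mod_lt _ hm)
    · intro i
      show v (i % m + 1) = v ((i + 1) % m)
      have h1 : (i + 1) % m = (i % m + 1) % m := by
        conv_lhs => rw [← Nat.div_add_mod i m]
        rw [add_assoc, Nat.mul_add_mod]
      rcases Nat.lt_or_ge (i % m + 1) m with h | h
      · rw [h1, Nat.mod_eq_of_lt h]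
      · have h2 : i % m + 1 = m := by
          have := Nat.mod_lt i hm
          omega
        rw [h1, h2, Nat.mod_self]
        exact hc
  have hmp := hMP π hinf
  set S : ℤ := ∑ i ∈ Finset.range m, w i with hS
  -- the average along multiples of m is S/m
  set A : ℕ → ℝ := fun ℓ => (∑ i ∈ Finset.range ℓ, ((π i).2.1 : ℝ)) / (ℓ : ℝ) with hA
  have hAval : ∀ k : ℕ, A ((k + 1) * m) = (S : ℝ) / (m : ℝ) := by
    intro k
    have hsum : ∑ i ∈ Finset.range ((k + 1) * m), ((π i).2.1 : ℝ)
        = (((k + 1 : ℕ) : ℝ)) * (S : ℝ) := by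
      have := periodic_sum m w (k + 1)
      have hcast : ∑ i ∈ Finset.range ((k + 1) * m), ((π i).2.1 : ℝ)
          = ((∑ i ∈ Finset.range ((k + 1) * m), w (i % m) : ℤ) : ℝ) := by
        push_cast
        rfl
      rw [hcast, this, hS]
      push_cast
      ring
    rw [hA]
    show (∑ i ∈ Finset.range ((k + 1) * m), ((π i).2.1 : ℝ)) / (((k + 1) * m : ℕ) : ℝ)
      = (S : ℝ) / (m : ℝ)
    rw [hsum]
    have hk : (((k + 1 : ℕ)) : ℝ) ≠ 0 := by positivity
    rw [Nat.cast_mul]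
    rw [mul_div_mul_left _ _ hk]
  -- A is bounded below
  set C : ℤ := ∑ i ∈ Finset.range m, |w i| with hC
  have hC0 : (0 : ℤ) ≤ C := Finset.sum_nonneg fun i _ => abs_nonneg _
  have hwb : ∀ i : ℕ, |w (i % m)| ≤ C := by
    intro i
    exact Finset.single_le_sum (f := fun i => |w i|) (fun i _ => abs_nonneg _)
      (Finset.mem_range.mpr (Nat.mod_lt _ hm))
  have hbdd : ∀ ℓ : ℕ, -(C : ℝ) ≤ A ℓ := by
    intro ℓ
    rcases Nat.eq_zero_or_pos ℓ with h | h
    · subst h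
      simp only [hA, Finset.range_zero, Finset.sum_empty, Nat.cast_zero, zero_div]
      exact neg_nonpos_of_nonneg (by exact_mod_cast hC0)
    · have h1 : -((ℓ : ℝ) * (C : ℝ)) ≤ ∑ i ∈ Finset.range ℓ, ((π i).2.1 : ℝ) := by
        have : ∀ i ∈ Finset.range ℓ, -(C : ℝ) ≤ ((π i).2.1 : ℝ) := by
          intro i _
          have := hwb i
          have h2 : -(C : ℤ) ≤ w (i % m) := by
            rcases abs_le.mp (le_refl |w (i % m)|) with ⟨h3, _⟩
            omega
          exact_mod_cast h2
        calc -((ℓ : ℝ) * (C : ℝ)) = ∑ _i ∈ Finset.range ℓ, -(C : ℝ) := by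
              simp [mul_comm]
          _ ≤ _ := Finset.sum_le_sum this
      have hl0 : (0 : ℝ) < (ℓ : ℝ) := by exact_mod_cast h
      rw [hA]
      show -(C:ℝ) ≤ (∑ i ∈ Finset.range ℓ, ((π i).2.1 : ℝ)) / (ℓ : ℝ)
      rw [le_div_iff₀ hl0]
      calc -(C:ℝ) * ℓ = -((ℓ:ℝ) * (C:ℝ)) := by ring
        _ ≤ _ := h1
  -- liminf ≤ S/m < 0, contradiction
  have hfreq : ∃ᶠ ℓ in atTop, A ℓ ≤ (S : ℝ) / (m : ℝ) := by
    rw [Filter.frequently_atTop]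
    intro N
    refine ⟨(N + 1) * m, ?_, le_of_eq (hAval N)⟩
    calc N ≤ N + 1 := by omega
      _ ≤ (N + 1) * m := Nat.le_mul_of_pos_right _ hm
  have hlim : atTop.liminf A ≤ (S : ℝ) / (m : ℝ) :=
    liminf_le_of_frequently_le hfreq (isBoundedUnder_of ⟨-(C:ℝ), hbdd⟩)
  have h0 : (0:ℝ) ≤ atTop.liminf A := hmp
  have : (S : ℝ) / (m : ℝ) < 0 := by
    apply div_neg_of_neg_of_pos
    · exact_mod_cast hneg
    · exact_mod_cast hm
  linarith

end MPLin

namespace MPLin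

lemma walk_bound {U : Type} [Fintype U] {E : Set (U × ℤ × U)} (hMP : SatMP E)
    {b : ℤ} (hb0 : b ≤ 0) (hbE : ∀ e ∈ E, b ≤ e.2.1) :
    ∀ (m : ℕ) (v : ℕ → U) (w : ℕ → ℤ), FWalk E m v w →
      (Fintype.card U : ℤ) * b ≤ ∑ i ∈ Finset.range m, w i := by
  intro m
  induction m using Nat.strong_induction_on with
  | _ m IH =>
    intro v w hw
    by_cases hm : m ≤ Fintype.card U
    · calc (Fintype.card U : ℤ) * b ≤ (m : ℤ) * b := by
            apply mul_le_mul_of_nonpos_right _ hb0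
            exact_mod_cast hm
        _ = ∑ _i ∈ Finset.range m, b := by
            rw [Finset.sum_const, Finset.card_range]
            push_cast
            ring
        _ ≤ ∑ i ∈ Finset.range m, w i := by
            apply Finset.sum_le_sum
            intro i hi
            exact hbE _ (hw i (Finset.mem_range.mp hi))
    · push_neg at hm
      have hcard : Fintype.card U < Fintype.card (Fin (m + 1)) := by
        rw [Fintype.card_fin]
        omega
      obtain ⟨x, y, hxy, hv⟩ :=
        Fintype.exists_ne_map_eq_of_card_lt (fun k : Fin (m + 1) => v (k : ℕ)) hcard
      -- wlog x < y
      obtain ⟨i, j, hij, hjm, hvij⟩ :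
          ∃ i j : ℕ, i < j ∧ j ≤ m ∧ v i = v j := by
        rcases lt_or_gt_of_ne hxy with h | h
        · exact ⟨x, y, h, Nat.lt_succ_iff.mp y.isLt, hv⟩
        · exact ⟨y, x, h, Nat.lt_succ_iff.mp x.isLt, hv.symm⟩
      obtain ⟨hw', hsum'⟩ := shorten hw hij hjm hvij
      have hlt : m - (j - i) < m := by omega
      have h1 := IH _ hlt _ _ hw'
      rw [hsum'] at h1
      have h2 : 0 ≤ ∑ k ∈ Finset.range (j - i), w (i + k) := by
        apply cycle_nonneg hMP (m := j - i) (v := fun k => v (i + k)) (w := fun k => w (i + k))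
        · intro k hk
          beta_reduce
          rw [show i + (k + 1) = i + k + 1 from by omega]
          exact hw (i + k) (by omega)
        · omega
        · beta_reduce
          rw [show i + (j - i) = j from by omega, show i + 0 = i from rfl]
          exact hvij.symm
      omega
  
end MPLin

namespace MPLin

lemma satMP_linE (W : Finset ℤ) (A : Finset ℤ) : SatMP (LinE W (↑A : Set ℤ)) := by
  intro π hπ
  obtain ⟨hE, hcons⟩ := hπ
  -- vertices lie in A
  have hv1 : ∀ ℓ, (π ℓ).1 ∈ A := by
    intro ℓ
    exact (hE ℓ).1
  have hAne : A.Nonempty := ⟨_, hv1 0⟩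
  -- partial sums dominate vertex differences
  have hvle : ∀ ℓ : ℕ, (π ℓ).1 ≤ (π 0).1 + ∑ i ∈ Finset.range ℓ, (π i).2.1 := by
    intro ℓ
    induction ℓ with
    | zero => simp
    | succ ℓ IHl =>
      rw [Finset.sum_range_succ]
      have h1 : (π (ℓ + 1)).1 = (π ℓ).2.2 := (hcons ℓ).symm
      have h2 : (π ℓ).2.2 - (π ℓ).1 ≤ (π ℓ).2.1 := (hE ℓ).2.2.2
      omega
  set D : ℤ := A.max' hAne - A.min' hAne with hD
  have hD0 : (0:ℤ) ≤ D := by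
    have := A.min'_le _ (hv1 0)
    have := A.le_max' _ (hv1 0)
    omega
  have hsumlb : ∀ ℓ : ℕ, -D ≤ ∑ i ∈ Finset.range ℓ, (π i).2.1 := by
    intro ℓ
    have h1 := hvle ℓ
    have h2 := A.min'_le _ (hv1 ℓ)
    have h3 := A.le_max' _ (hv1 0)
    omega
  -- weights bounded above
  have hWne : W.Nonempty := ⟨_, (hE 0).2.2.1⟩
  set M : ℤ := max (W.max' hWne) 0 with hM
  have hub : ∀ i : ℕ, (π i).2.1 ≤ M := fun i =>
    le_trans (W.le_max' _ (hE i).2.2.1) (le_max_left _ _)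
  have hM0 : (0:ℤ) ≤ M := le_max_right _ _
  -- now the liminf estimate
  show (0:ℝ) ≤ atTop.liminf fun ℓ : ℕ => (∑ i ∈ Finset.range ℓ, ((π i).2.1 : ℝ)) / (ℓ : ℝ)
  set Aseq : ℕ → ℝ := fun ℓ : ℕ => (∑ i ∈ Finset.range ℓ, ((π i).2.1 : ℝ)) / (ℓ : ℝ)
    with hAseq
  set g : ℕ → ℝ := fun ℓ : ℕ => (-(D:ℝ)) / (ℓ : ℝ) with hg
  have htend : Filter.Tendsto g atTop (nhds 0) := tendsto_const_div_atTop_nhds_zero_nat _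
  have hglim : atTop.liminf g = 0 := htend.liminf_eq
  have hle : ∀ ℓ : ℕ, g ℓ ≤ Aseq ℓ := by
    intro ℓ
    rcases Nat.eq_zero_or_pos ℓ with h | h
    · subst h
      simp [hg, hAseq]
    · have hl0 : (0:ℝ) < (ℓ:ℝ) := by exact_mod_cast h
      have hnum : (-(D:ℝ)) ≤ ∑ i ∈ Finset.range ℓ, ((π i).2.1 : ℝ) := by
        exact_mod_cast hsumlb ℓ
      exact div_le_div_of_nonneg_right hnum hl0.le
  have haub : ∀ ℓ : ℕ, Aseq ℓ ≤ (M:ℝ) := by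
    intro ℓ
    rcases Nat.eq_zero_or_pos ℓ with h | h
    · subst h
      simp only [hAseq, Finset.range_zero, Finset.sum_empty, Nat.cast_zero, zero_div]
      exact_mod_cast hM0
    · have hl0 : (0:ℝ) < (ℓ:ℝ) := by exact_mod_cast h
      have hnum : ∑ i ∈ Finset.range ℓ, ((π i).2.1 : ℝ) ≤ (ℓ:ℝ) * (M:ℝ) := by
        calc ∑ i ∈ Finset.range ℓ, ((π i).2.1 : ℝ) ≤ ∑ _i ∈ Finset.range ℓ, (M:ℝ) :=
              Finset.sum_le_sum fun i _ => by exact_mod_cast hub i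
          _ = (ℓ:ℝ) * (M:ℝ) := by rw [Finset.sum_const, Finset.card_range]; ring
      show (∑ i ∈ Finset.range ℓ, ((π i).2.1 : ℝ)) / (ℓ : ℝ) ≤ (M:ℝ)
      rw [div_le_iff₀ hl0]
      calc ∑ i ∈ Finset.range ℓ, ((π i).2.1 : ℝ) ≤ (ℓ:ℝ) * (M:ℝ) := hnum
        _ = (M:ℝ) * (ℓ:ℝ) := by ring
  have hmain : atTop.liminf g ≤ atTop.liminf Aseq :=
    liminf_le_liminf (Filter.Eventually.of_forall hle)
      (htend.isBoundedUnder_ge)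
      ((isBoundedUnder_of ⟨(M:ℝ), haub⟩).isCoboundedUnder_ge)
  rw [hglim] at hmain
  exact hmain

end MPLin


/-- if there exists an `(n,W)`-universal graph with `s` vertices,
then there exists a finite set `A ⊆ ℤ` with `|A| ≤ s` such that the `W`-linear graph
on `A` is `(n,W)`-universal. -/
theorem linearisation {W : Finset ℤ} (n s : ℕ) (U : Type) [Fintype U]
    (EU : Set (U × ℤ × U)) (hU : Universal n W EU) (hs : Fintype.card U = s) :
    ∃ A : Finset ℤ, A.card ≤ s ∧ Universal n W (LinE W (↑A : Set ℤ)) := by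
  classical
  obtain ⟨hMPU, hHom⟩ := hU
  set E' : Set (U × ℤ × U) := {e | e ∈ EU ∧ e.2.1 ∈ W} with hE'
  have hE'sub : ∀ e ∈ E', e ∈ EU := fun e he => he.1
  have hMP' : SatMP E' := fun π hπ => hMPU π ⟨fun i => hE'sub _ (hπ.1 i), hπ.2⟩
  obtain ⟨b, hb0, hbW⟩ : ∃ b : ℤ, b ≤ 0 ∧ ∀ x ∈ W, b ≤ x := by
    rcases W.eq_empty_or_nonempty with h | h
    · exact ⟨0, le_refl 0, by simp [h]⟩
    · exact ⟨min (W.min' h) 0, min_le_right _ _,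
        fun x hx => le_trans (min_le_left _ _) (W.min'_le x hx)⟩
  have hbE : ∀ e ∈ E', b ≤ e.2.1 := fun e he => hbW _ he.2
  have hex : ∀ u : U, ∃ lb : ℤ,
      (∃ u0 p, FinPath E' u0 p ∧ lastV u0 p = u ∧ pathWeight p = lb) ∧
      ∀ z : ℤ, (∃ u0 p, FinPath E' u0 p ∧ lastV u0 p = u ∧ pathWeight p = z) → lb ≤ z := by
    intro u
    apply Int.exists_least_of_bdd
    · refine ⟨(Fintype.card U : ℤ) * b, ?_⟩
      rintro z ⟨u0, p, hp, -, rfl⟩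
      obtain ⟨v, w, hw, -, -, hsum⟩ := MPLin.finPath_toFun p hp
      rw [← hsum]
      exact MPLin.walk_bound hMP' hb0 hbE _ v w hw
    · exact ⟨0, u, [], MPLin.finPath_nil _ _, rfl, rfl⟩
  choose f hf1 hf2 using hex
  have hkey : ∀ e ∈ E', f e.2.2 - f e.1 ≤ e.2.1 := by
    intro e he
    obtain ⟨u0, p, hp, hl, hwt⟩ := hf1 e.1
    have h2 := MPLin.finPath_snoc hp he hl
    have h3 := hf2 e.2.2 (pathWeight p + e.2.1)
      ⟨u0, p ++ [e], h2, MPLin.lastV_snoc u0 p e, MPLin.pathWeight_snoc p e⟩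
    omega
  set A : Finset ℤ := Finset.image f Finset.univ with hA
  have hfA : ∀ u : U, f u ∈ A := fun u => Finset.mem_image.mpr ⟨u, Finset.mem_univ u, rfl⟩
  refine ⟨A, ?_, ?_, ?_⟩
  · calc A.card ≤ Finset.univ.card := Finset.card_image_le
      _ = s := by rw [Finset.card_univ, hs]
  · exact MPLin.satMP_linE W A
  · intro G hn hG
    obtain ⟨φ, hφ⟩ := hHom G hn hG
    refine ⟨fun x => f (φ x), ?_⟩
    intro e he
    have hwt := G.wt e he
    have hmem : (φ e.1, e.2.1, φ e.2.2) ∈ E' := ⟨hφ e he, hwt⟩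
    exact ⟨hfA (φ e.1), hfA (φ e.2.2), hwt, hkey _ hmem⟩
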